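/- Let û ∈ L²(ℝ³;ℂ³) satisfy ξ·û(ξ) = 0 for almost every ξ. Then |∫_{ℝ³} χ̂_k(ξ)² ⟨Π_ξ(∫_{ℝ³}(û(ξ−ζ)·ζ)·û(ζ) dζ), û(ξ)⟩ dξ| ≤ (3/2)·|k|·(2δ)^{3/2}·‖χ̂_k·û‖_{L²}·‖û‖²_{L²}, where ⟨·,·⟩ denotes the Hermitian inner product on ℂ³. -/

import Mathlib

open MeasureTheory Real Set

noncomputable section

/-- Bilinear dot product of a real vector with a complex vector. -/
def rdot (ξ : EuclideanSpace ℝ (Fin 3)) (z : EuclideanSpace ℂ (Fin 3)) : ℂ :=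
  ∑ i, (ξ i : ℂ) * z i

/-- The Fourier-side Leray projection `Π_ξ z = z - (z·ξ) ξ / |ξ|²`. -/
def fproj (ξ : EuclideanSpace ℝ (Fin 3)) (z : EuclideanSpace ℂ (Fin 3)) :
    EuclideanSpace ℂ (Fin 3) :=
  z - (rdot ξ z / ((‖ξ‖ : ℂ) ^ 2)) • (EuclideanSpace.equiv (Fin 3) ℂ).symm (fun i => (ξ i : ℂ))

def cify (ξ : EuclideanSpace ℝ (Fin 3)) : EuclideanSpace ℂ (Fin 3) :=
  (EuclideanSpace.equiv (Fin 3) ℂ).symm (fun i => (ξ i : ℂ))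

lemma cify_apply (ξ : EuclideanSpace ℝ (Fin 3)) (i : Fin 3) : cify ξ i = (ξ i : ℂ) := rfl

lemma rdot_eq_inner (ξ : EuclideanSpace ℝ (Fin 3)) (z : EuclideanSpace ℂ (Fin 3)) :
    rdot ξ z = (inner ℂ (cify ξ) z : ℂ) := by
  simp [rdot, PiLp.inner_apply, RCLike.inner_apply, cify_apply, Complex.conj_ofReal, mul_comm]

lemma norm_cify (ξ : EuclideanSpace ℝ (Fin 3)) : ‖cify ξ‖ = ‖ξ‖ := by
  rw [EuclideanSpace.norm_eq, EuclideanSpace.norm_eq]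
  congr 1
  refine Finset.sum_congr rfl fun i _ => ?_
  rw [cify_apply, Complex.norm_real]

lemma norm_rdot_le (ξ : EuclideanSpace ℝ (Fin 3)) (z : EuclideanSpace ℂ (Fin 3)) :
    ‖rdot ξ z‖ ≤ ‖ξ‖ * ‖z‖ := by
  rw [rdot_eq_inner, ← norm_cify ξ]
  exact norm_inner_le_norm _ _

lemma norm_fproj_le (ξ : EuclideanSpace ℝ (Fin 3)) (z : EuclideanSpace ℂ (Fin 3)) :
    ‖fproj ξ z‖ ≤ ‖z‖ := by
  rcases eq_or_ne ξ 0 with rfl | hξ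
  · have h0 : cify (0 : EuclideanSpace ℝ (Fin 3)) = 0 := by
      ext i; simp [cify_apply]
    show ‖z - _ • cify 0‖ ≤ ‖z‖
    simp [h0]
  · set v := cify ξ with hv
    have hvn : ‖v‖ = ‖ξ‖ := norm_cify ξ
    have hv0 : v ≠ 0 := by
      intro h; apply hξ; rw [← norm_eq_zero, ← hvn, h, norm_zero]
    set c : ℂ := rdot ξ z / ((‖ξ‖ : ℂ) ^ 2) with hc
    have hfp : fproj ξ z = z - c • v := rfl
    have horth : (inner ℂ v (z - c • v) : ℂ) = 0 := by
      rw [inner_sub_right, inner_smul_right, ← rdot_eq_inner,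
        inner_self_eq_norm_sq_to_K, hvn, hc]
      rw [RCLike.ofReal_eq_complex_ofReal]
      have hne : ((‖ξ‖ : ℂ) ^ 2) ≠ 0 := by
        simp [norm_eq_zero, hξ]
      field_simp
      rw [div_self (pow_ne_zero_iff two_ne_zero |>.mp hne), sub_self, mul_zero]
    have hpyth : ‖z‖ ^ 2 = ‖z - c • v‖ ^ 2 + ‖c • v‖ ^ 2 := by
      have := norm_add_sq (𝕜 := ℂ) (z - c • v) (c • v)
      have hi : (inner ℂ (z - c • v) (c • v) : ℂ) = 0 := by
        rw [inner_smul_right, ← inner_conj_symm, horth, map_zero, mul_zero]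
      rw [hi] at this
      simpa using this
    nlinarith [norm_nonneg (z - c • v), norm_nonneg z, norm_nonneg (c • v), hfp ▸ hpyth]

lemma rdot_split (ξ ζ : EuclideanSpace ℝ (Fin 3)) (z : EuclideanSpace ℂ (Fin 3)) :
    rdot ζ z = rdot ξ z - rdot (ξ - ζ) z := by
  simp only [rdot, ← Finset.sum_sub_distrib]
  refine Finset.sum_congr rfl fun i _ => ?_
  have : (ξ - ζ) i = ξ i - ζ i := rfl
  rw [this]
  push_cast
  ring

/-- L² × L² → L¹. -/
lemma int_mul_of_L2 {f g : EuclideanSpace ℝ (Fin 3) → ℝ}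
    (hf : MemLp f 2 volume) (hg : MemLp g 2 volume) :
    Integrable (fun x => f x * g x) volume := by
  rw [← memLp_one_iff_integrable]
  have := hg.smul (r := 1) hf
  · exact this

lemma rpow_two_eq (x : ℝ) : x ^ (2:ℝ) = x ^ (2:ℕ) := by
  rw [show (2:ℝ) = ((2:ℕ):ℝ) by norm_num, Real.rpow_natCast]

/-- The estimate for the trilinear term `I₃` in the proof of Lemma 2.9. -/
theorem stmt_11
    (k : EuclideanSpace ℝ (Fin 3)) (hk : k ≠ 0)
    (δ : ℝ) (hδ0 : 0 < δ) (hδ : δ < ‖k‖ / (2 * Real.sqrt 3))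
    (χ : EuclideanSpace ℝ (Fin 3) → ℝ) (hχmeas : Measurable χ)
    (hχ01 : ∀ ξ, χ ξ ∈ Set.Icc (0:ℝ) 1)
    (hχsupp : ∀ ξ, χ ξ ≠ 0 → ∀ i, |ξ i - k i| ≤ δ)
    (hχann : ∀ ξ, χ ξ ≠ 0 → ‖k‖ / 2 ≤ ‖ξ‖ ∧ ‖ξ‖ ≤ 3 / 2 * ‖k‖)
    (u : EuclideanSpace ℝ (Fin 3) → EuclideanSpace ℂ (Fin 3))
    (hu : MemLp u 2 volume)
    (hdiv : ∀ᵐ ξ, rdot ξ (u ξ) = 0) :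
    ‖∫ ξ, ((χ ξ : ℂ) ^ 2
        * (inner ℂ (fproj ξ (∫ ζ, rdot ζ (u (ξ - ζ)) • u ζ)) (u ξ) : ℂ))‖
      ≤ 3 / 2 * ‖k‖ * (2 * δ) ^ ((3:ℝ)/2)
        * (∫ ξ, (χ ξ * ‖u ξ‖) ^ 2) ^ ((1:ℝ)/2) * (∫ ξ, ‖u ξ‖ ^ 2) := by
  set M : ℝ := ∫ ξ, ‖u ξ‖ ^ 2 with hMdef
  have hM0 : 0 ≤ M := integral_nonneg fun _ => sq_nonneg _
  -- step 1 : pointwise bound for the inner (convolution) integral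
  have hFbound : ∀ ξ : EuclideanSpace ℝ (Fin 3),
      ‖∫ ζ, rdot ζ (u (ξ - ζ)) • u ζ‖ ≤ ‖ξ‖ * M := by
    intro ξ
    have hmp := Measure.measurePreserving_sub_left
      (volume : Measure (EuclideanSpace ℝ (Fin 3))) ξ
    have hshift : MemLp (fun ζ => u (ξ - ζ)) 2 volume := hu.comp_measurePreserving hmp
    -- the integrand agrees a.e. with `rdot ξ (u (ξ-ζ)) • u ζ`
    have hae : ∀ᵐ ζ, rdot ζ (u (ξ - ζ)) • u ζ = rdot ξ (u (ξ - ζ)) • u ζ := by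
      have h0 : ∀ᵐ ζ, rdot (ξ - ζ) (u (ξ - ζ)) = 0 :=
        hmp.quasiMeasurePreserving.ae hdiv
      filter_upwards [h0] with ζ h0ζ
      rw [rdot_split ξ ζ, h0ζ, sub_zero]
    rw [integral_congr_ae hae]
    -- norm bound
    have hnb : ∀ ζ, ‖rdot ξ (u (ξ - ζ)) • u ζ‖ ≤ ‖ξ‖ * ‖u (ξ - ζ)‖ * ‖u ζ‖ := by
      intro ζ
      rw [norm_smul]
      exact mul_le_mul_of_nonneg_right (norm_rdot_le _ _) (norm_nonneg _)
    have hdom : Integrable (fun ζ => ‖ξ‖ * ‖u (ξ - ζ)‖ * ‖u ζ‖) volume := by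
      have : Integrable (fun ζ => (‖ξ‖ * ‖u (ξ - ζ)‖) * ‖u ζ‖) volume :=
        int_mul_of_L2 (hshift.norm.const_mul ‖ξ‖) hu.norm
      simpa [mul_assoc] using this
    calc ‖∫ ζ, rdot ξ (u (ξ - ζ)) • u ζ‖
        ≤ ∫ ζ, ‖ξ‖ * ‖u (ξ - ζ)‖ * ‖u ζ‖ :=
          norm_integral_le_of_norm_le hdom (ae_of_all _ hnb)
      _ = ‖ξ‖ * ∫ ζ, ‖u (ξ - ζ)‖ * ‖u ζ‖ := by
          rw [← integral_const_mul]; simp_rw [mul_assoc]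
      _ ≤ ‖ξ‖ * M := by
          refine mul_le_mul_of_nonneg_left ?_ (norm_nonneg ξ)
          have hconj : (2:ℝ).HolderConjugate 2 := Real.HolderConjugate.two_two
          have h2 : ENNReal.ofReal (2:ℝ) = 2 := by
            rw [ENNReal.ofReal_ofNat]
          calc ∫ ζ, ‖u (ξ - ζ)‖ * ‖u ζ‖
              ≤ (∫ ζ, ‖u (ξ - ζ)‖ ^ (2:ℝ)) ^ ((1:ℝ)/2) * (∫ ζ, ‖u ζ‖ ^ (2:ℝ)) ^ ((1:ℝ)/2) :=
                integral_mul_le_Lp_mul_Lq_of_nonneg hconj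
                  (ae_of_all _ fun _ => norm_nonneg _)
                  (ae_of_all _ fun _ => norm_nonneg _)
                  (by rw [h2]; exact hshift.norm) (by rw [h2]; exact hu.norm)
            _ = M ^ ((1:ℝ)/2) * M ^ ((1:ℝ)/2) := by
                have hintshift : ∫ ζ, ‖u (ξ - ζ)‖ ^ (2:ℕ) = M :=
                  hmp.integral_comp (MeasurableEquiv.subLeft ξ).measurableEmbedding
                    (fun ζ => ‖u ζ‖ ^ 2)
                simp_rw [rpow_two_eq]
                rw [hintshift, hMdef]
            _ = M := by
                rw [← Real.rpow_add' hM0 (by norm_num)]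
                norm_num
  -- step 2 : pointwise bound of the full integrand
  set C : ℝ := 3 / 2 * ‖k‖ * M with hCdef
  have hC0 : 0 ≤ C := by positivity
  have hbound : ∀ ξ, ‖(χ ξ : ℂ) ^ 2
      * (inner ℂ (fproj ξ (∫ ζ, rdot ζ (u (ξ - ζ)) • u ζ)) (u ξ) : ℂ)‖
      ≤ C * (χ ξ * (χ ξ * ‖u ξ‖)) := by
    intro ξ
    rcases eq_or_ne (χ ξ) 0 with h0 | h0
    · simp [h0]
    · obtain ⟨-, hξle⟩ := hχann ξ h0
      have hχ0 := (hχ01 ξ).1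
      have hχ1 := (hχ01 ξ).2
      have hin : ‖(inner ℂ (fproj ξ (∫ ζ, rdot ζ (u (ξ - ζ)) • u ζ)) (u ξ) : ℂ)‖
          ≤ (‖ξ‖ * M) * ‖u ξ‖ := by
        calc ‖(inner ℂ (fproj ξ (∫ ζ, rdot ζ (u (ξ - ζ)) • u ζ)) (u ξ) : ℂ)‖
            ≤ ‖fproj ξ (∫ ζ, rdot ζ (u (ξ - ζ)) • u ζ)‖ * ‖u ξ‖ := norm_inner_le_norm _ _
          _ ≤ ‖∫ ζ, rdot ζ (u (ξ - ζ)) • u ζ‖ * ‖u ξ‖ :=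
              mul_le_mul_of_nonneg_right (norm_fproj_le _ _) (norm_nonneg _)
          _ ≤ (‖ξ‖ * M) * ‖u ξ‖ :=
              mul_le_mul_of_nonneg_right (hFbound ξ) (norm_nonneg _)
      have hnc : ‖((χ ξ : ℂ)) ^ 2‖ = χ ξ ^ 2 := by
        rw [norm_pow, Complex.norm_real, Real.norm_eq_abs, abs_of_nonneg hχ0]
      rw [norm_mul, hnc]
      have hkM : ‖ξ‖ * M ≤ 3 / 2 * ‖k‖ * M := mul_le_mul_of_nonneg_right hξle hM0
      have h1 : χ ξ ^ 2 * ‖(inner ℂ (fproj ξ (∫ ζ, rdot ζ (u (ξ - ζ)) • u ζ)) (u ξ) : ℂ)‖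
          ≤ χ ξ ^ 2 * ((3 / 2 * ‖k‖ * M) * ‖u ξ‖) := by
        refine mul_le_mul_of_nonneg_left (hin.trans ?_) (sq_nonneg _)
        exact mul_le_mul_of_nonneg_right hkM (norm_nonneg _)
      calc χ ξ ^ 2 * ‖(inner ℂ (fproj ξ (∫ ζ, rdot ζ (u (ξ - ζ)) • u ζ)) (u ξ) : ℂ)‖
          ≤ χ ξ ^ 2 * ((3 / 2 * ‖k‖ * M) * ‖u ξ‖) := h1
        _ = C * (χ ξ * (χ ξ * ‖u ξ‖)) := by rw [hCdef]; ring
  -- step 3 : χ ∈ L², with ∫ χ² ≤ (2δ)³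
  set B : Set (Fin 3 → ℝ) := Set.pi univ fun i => Icc (k i - δ) (k i + δ) with hBdef
  have hBmeas : MeasurableSet B := MeasurableSet.univ_pi fun i => measurableSet_Icc
  set e := (MeasurableEquiv.toLp 2 (Fin 3 → ℝ)).symm with hedef
  set K : Set (EuclideanSpace ℝ (Fin 3)) := e ⁻¹' B with hKdef
  have hKmeas : MeasurableSet K := e.measurable hBmeas
  have hvp : MeasurePreserving e volume volume :=
    EuclideanSpace.volume_preserving_symm_measurableEquiv_toLp (Fin 3)
  have hvolB : volume B = ENNReal.ofReal (2 * δ) ^ 3 := by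
    rw [hBdef, volume_pi_pi]
    have : ∀ i : Fin 3, volume (Icc (k i - δ) (k i + δ)) = ENNReal.ofReal (2 * δ) := by
      intro i; rw [Real.volume_Icc]; congr 1; ring
    simp [this]
  have hvolK : volume K = ENNReal.ofReal (2 * δ) ^ 3 := by
    rw [hKdef, hvp.measure_preimage hBmeas.nullMeasurableSet, hvolB]
  have hmemK : ∀ ξ, χ ξ ≠ 0 → ξ ∈ K := by
    intro ξ h0
    intro i _
    have h := hχsupp ξ h0 i
    rw [abs_le] at h
    have hei : e ξ i = ξ i := rfl
    simp only [Set.mem_Icc, hei]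
    constructor <;> linarith [h.1, h.2]
  have hχle : ∀ ξ, ‖χ ξ‖ ≤ ‖K.indicator (fun _ => (1:ℝ)) ξ‖ := by
    intro ξ
    rcases eq_or_ne (χ ξ) 0 with h0 | h0
    · simp [h0]
    · rw [Set.indicator_of_mem (hmemK ξ h0)]
      simp only [Real.norm_eq_abs, abs_of_nonneg (hχ01 ξ).1, abs_one]
      exact (hχ01 ξ).2
  have hχL2 : MemLp χ 2 volume := by
    refine MemLp.of_le (memLp_indicator_const 2 hKmeas (1:ℝ) (Or.inr ?_))
      hχmeas.aestronglyMeasurable (ae_of_all _ hχle)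
    rw [hvolK]
    exact ENNReal.pow_ne_top ENNReal.ofReal_ne_top
  have hχusq : MemLp (fun ξ => χ ξ * ‖u ξ‖) 2 volume := by
    refine MemLp.of_le hu.norm (hχmeas.aestronglyMeasurable.mul hu.1.norm)
      (ae_of_all _ fun ξ => ?_)
    rw [Real.norm_eq_abs, Real.norm_eq_abs, abs_mul, abs_of_nonneg (hχ01 ξ).1,
      abs_of_nonneg (norm_nonneg _)]
    exact mul_le_of_le_one_left (norm_nonneg _) (hχ01 ξ).2
  have hJint : Integrable (fun ξ => χ ξ * (χ ξ * ‖u ξ‖)) volume := int_mul_of_L2 hχL2 hχusq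
  have hintχsq : ∫ ξ, χ ξ ^ (2:ℝ) ≤ (2 * δ) ^ (3:ℕ) := by
    have hind : Integrable (K.indicator fun _ => (1:ℝ)) volume := by
      rw [integrable_indicator_iff hKmeas]
      exact integrableOn_const (by rw [hvolK]; exact ENNReal.pow_ne_top ENNReal.ofReal_ne_top)
    have hmono : ∫ ξ, χ ξ ^ (2:ℝ) ≤ ∫ ξ, K.indicator (fun _ => (1:ℝ)) ξ := by
      refine integral_mono ?_ hind fun ξ => ?_
      · simp_rw [rpow_two_eq, sq]
        exact int_mul_of_L2 hχL2 hχL2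
      · rcases eq_or_ne (χ ξ) 0 with h0 | h0
        · rw [h0]
          simp only [ne_eq]
          rw [Real.zero_rpow (by norm_num)]
          exact Set.indicator_nonneg (fun _ _ => zero_le_one) ξ
        · rw [Set.indicator_of_mem (hmemK ξ h0), rpow_two_eq]
          calc χ ξ ^ (2:ℕ) ≤ 1 ^ (2:ℕ) :=
              pow_le_pow_left₀ (hχ01 ξ).1 (hχ01 ξ).2 2
            _ = 1 := one_pow 2
    refine hmono.trans ?_
    rw [integral_indicator_const _ hKmeas, measureReal_def, hvolK, smul_eq_mul, mul_one,
      ENNReal.toReal_pow, ENNReal.toReal_ofReal (by positivity)]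
  -- step 4 : assemble
  set X : ℝ := ∫ ξ, (χ ξ * ‖u ξ‖) ^ 2 with hXdef
  have hX0 : 0 ≤ X := integral_nonneg fun _ => sq_nonneg _
  have hmain : ‖∫ ξ, ((χ ξ : ℂ) ^ 2
      * (inner ℂ (fproj ξ (∫ ζ, rdot ζ (u (ξ - ζ)) • u ζ)) (u ξ) : ℂ))‖
      ≤ C * ∫ ξ, χ ξ * (χ ξ * ‖u ξ‖) := by
    calc ‖∫ ξ, ((χ ξ : ℂ) ^ 2
        * (inner ℂ (fproj ξ (∫ ζ, rdot ζ (u (ξ - ζ)) • u ζ)) (u ξ) : ℂ))‖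
        ≤ ∫ ξ, C * (χ ξ * (χ ξ * ‖u ξ‖)) :=
          norm_integral_le_of_norm_le (hJint.const_mul C) (ae_of_all _ hbound)
      _ = C * ∫ ξ, χ ξ * (χ ξ * ‖u ξ‖) := integral_const_mul _ _
  have hCS : ∫ ξ, χ ξ * (χ ξ * ‖u ξ‖) ≤ (2 * δ) ^ ((3:ℝ)/2) * X ^ ((1:ℝ)/2) := by
    have hconj : (2:ℝ).HolderConjugate 2 := Real.HolderConjugate.two_two
    have h2 : ENNReal.ofReal (2:ℝ) = 2 := by rw [ENNReal.ofReal_ofNat]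
    calc ∫ ξ, χ ξ * (χ ξ * ‖u ξ‖)
        ≤ (∫ ξ, χ ξ ^ (2:ℝ)) ^ ((1:ℝ)/2) * (∫ ξ, (χ ξ * ‖u ξ‖) ^ (2:ℝ)) ^ ((1:ℝ)/2) :=
          integral_mul_le_Lp_mul_Lq_of_nonneg hconj
            (ae_of_all _ fun ξ => (hχ01 ξ).1)
            (ae_of_all _ fun ξ => mul_nonneg (hχ01 ξ).1 (norm_nonneg _))
            (by rw [h2]; exact hχL2) (by rw [h2]; exact hχusq)
      _ ≤ (2 * δ) ^ ((3:ℝ)/2) * X ^ ((1:ℝ)/2) := by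
          refine mul_le_mul ?_ ?_ (Real.rpow_nonneg ?_ _) (by positivity)
          · calc (∫ ξ, χ ξ ^ (2:ℝ)) ^ ((1:ℝ)/2)
                ≤ ((2 * δ) ^ (3:ℕ)) ^ ((1:ℝ)/2) :=
                  Real.rpow_le_rpow (integral_nonneg fun ξ =>
                    Real.rpow_nonneg (hχ01 ξ).1 _) hintχsq (by norm_num)
              _ = (2 * δ) ^ ((3:ℝ)/2) := by
                  rw [← Real.rpow_natCast (2 * δ) 3, ← Real.rpow_mul (by positivity)]
                  norm_num
          · refine le_of_eq ?_
            have hXeq : ∫ ξ, (χ ξ * ‖u ξ‖) ^ (2:ℝ) = X := by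
              rw [hXdef]
              exact integral_congr_ae (ae_of_all _ fun ξ => rpow_two_eq _)
            rw [hXeq]
          · exact integral_nonneg fun ξ =>
              Real.rpow_nonneg (mul_nonneg (hχ01 ξ).1 (norm_nonneg _)) _
  calc ‖∫ ξ, ((χ ξ : ℂ) ^ 2
      * (inner ℂ (fproj ξ (∫ ζ, rdot ζ (u (ξ - ζ)) • u ζ)) (u ξ) : ℂ))‖
      ≤ C * ((2 * δ) ^ ((3:ℝ)/2) * X ^ ((1:ℝ)/2)) :=
        hmain.trans (mul_le_mul_of_nonneg_left hCS hC0)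
    _ = 3 / 2 * ‖k‖ * (2 * δ) ^ ((3:ℝ)/2) * X ^ ((1:ℝ)/2) * M := by
        rw [hCdef]; ring
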